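/- The projected matching is a 1.5-approximation: let I be an SMTI-1TM instance, I' its translated SMI instance, and M' a stable matching of I'. Then the projection M of M' satisfies 3·|M| ≥ 2·|N| for every (weakly) stable matching N of I; in particular |M_opt|/|M| ≤ 1.5 for a maximum-size stable matching M_opt of I. -/

import Mathlib

/-- An instance of the stable marriage problem with ties and incomplete lists (SMTI),
with men of type `α` and women of type `β`.  Each person's preference list is
represented by a rank function: `mpref m w = none` means woman `w` is unacceptable
to man `m`, and `mpref m w = some r` means `w` is acceptable with rank `r`
(smaller rank = more preferred; equal ranks = a tie).  This encodes exactly a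
total preorder on the set of acceptable partners. -/
structure SMInst (α β : Type) where
  mpref : α → β → Option ℕ
  wpref : β → α → Option ℕ

namespace SMInst

variable {α β : Type}

/-- Woman `w` is acceptable to man `m`. -/
def mAcc (I : SMInst α β) (m : α) (w : β) : Prop := (I.mpref m w).isSome

/-- Man `m` is acceptable to woman `w`. -/
def wAcc (I : SMInst α β) (w : β) (m : α) : Prop := (I.wpref w m).isSome

/-- Man `m` strictly prefers woman `w` to woman `w'`. -/
def mPref (I : SMInst α β) (m : α) (w w' : β) : Prop :=
  ∃ r r', I.mpref m w = some r ∧ I.mpref m w' = some r' ∧ r < r'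

/-- Woman `w` strictly prefers man `m` to man `m'`. -/
def wPref (I : SMInst α β) (w : β) (m m' : α) : Prop :=
  ∃ r r', I.wpref w m = some r ∧ I.wpref w m' = some r' ∧ r < r'

/-- `M` is a matching of `I`: all pairs mutually acceptable and no person in two pairs. -/
def IsMatching (I : SMInst α β) (M : Finset (α × β)) : Prop :=
  (∀ p ∈ M, I.mAcc p.1 p.2 ∧ I.wAcc p.2 p.1) ∧
  (∀ p ∈ M, ∀ q ∈ M, p.1 = q.1 → p = q) ∧
  (∀ p ∈ M, ∀ q ∈ M, p.2 = q.2 → p = q)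

/-- Man `m` is single (unmatched) in `M`. -/
def mSingle (M : Finset (α × β)) (m : α) : Prop := ∀ w, (m, w) ∉ M

/-- Woman `w` is single (unmatched) in `M`. -/
def wSingle (M : Finset (α × β)) (w : β) : Prop := ∀ m, (m, w) ∉ M

/-- `(m, w)` blocks `M` in instance `I`. -/
def Blocks (I : SMInst α β) (M : Finset (α × β)) (m : α) (w : β) : Prop :=
  I.mAcc m w ∧ I.wAcc w m ∧
  (mSingle M m ∨ ∃ w', (m, w') ∈ M ∧ I.mPref m w w') ∧
  (wSingle M w ∨ ∃ m', (m', w) ∈ M ∧ I.wPref w m m')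

/-- `M` is a (weakly) stable matching of `I`. -/
def IsStable (I : SMInst α β) (M : Finset (α × β)) : Prop :=
  I.IsMatching M ∧ ∀ m w, ¬ I.Blocks M m w

/-- Man `m` prefers matching `M'` to matching `M`, with respect to his list in `I`:
he is matched in `M'` to an acceptable partner, and he is either single in `M`
or strictly prefers his `M'`-partner to his `M`-partner. -/
def mPrefMatching (I : SMInst α β) (m : α) (M' M : Finset (α × β)) : Prop :=
  ∃ w, (m, w) ∈ M' ∧ I.mAcc m w ∧
    (mSingle M m ∨ ∃ w', (m, w') ∈ M ∧ I.mPref m w w')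

/-- Woman `w` prefers matching `M'` to matching `M`, with respect to her list in `I`. -/
def wPrefMatching (I : SMInst α β) (w : β) (M' M : Finset (α × β)) : Prop :=
  ∃ m, (m, w) ∈ M' ∧ I.wAcc w m ∧
    (wSingle M w ∨ ∃ m', (m', w) ∈ M ∧ I.wPref w m m')

/-- `I` and `I'` differ only in man `m`'s preference list. -/
def mDiffOnly (I I' : SMInst α β) (m : α) : Prop :=
  I.wpref = I'.wpref ∧ ∀ m', m' ≠ m → I.mpref m' = I'.mpref m'

/-- `I` and `I'` differ only in woman `w`'s preference list. -/
def wDiffOnly (I I' : SMInst α β) (w : β) : Prop :=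
  I.mpref = I'.mpref ∧ ∀ w', w' ≠ w → I.wpref w' = I'.wpref w'

/-- Men's lists contain no ties. -/
def MStrict (I : SMInst α β) : Prop :=
  ∀ m w w', I.mpref m w = I.mpref m w' → I.mAcc m w → w = w'

/-- Women's lists contain no ties. -/
def WStrict (I : SMInst α β) : Prop :=
  ∀ w m m', I.wpref w m = I.wpref w m' → I.wAcc w m → m = m'

/-- `I` is an SMI instance: no ties at all (all lists strictly ordered). -/
def NoTies (I : SMInst α β) : Prop := I.MStrict ∧ I.WStrict

/-- `I` is an SMTI-1TM instance: ties may occur only in men's lists,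
i.e. women's lists are strictly ordered. -/
def OneTM (I : SMInst α β) : Prop := I.WStrict

/-- `I'` is obtained from `I` by breaking ties: same acceptable sets, and every
strict preference of `I` is preserved in `I'` (so each person's list in `I'` is a
linear extension of the corresponding total preorder in `I`). -/
def Refines (I I' : SMInst α β) : Prop :=
  (∀ m w, I.mAcc m w ↔ I'.mAcc m w) ∧
  (∀ w m, I.wAcc w m ↔ I'.wAcc w m) ∧
  (∀ m w w', I.mPref m w w' → I'.mPref m w w') ∧
  (∀ w m m', I.wPref w m m' → I'.wPref w m m')

end SMInst

namespace SMInst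

/-- The translation of an SMTI-1TM instance `I` (with men/women indexed by `Fin n`)
into an SMI instance `I'`.  Men of `I'`: `Sum.inl i` is `a_i`, `Sum.inr j` is `b_j`.
Women of `I'`: `Sum.inl j` is `s_j`, `Sum.inr j` is `t_j`.
The strict list of `a_i` replaces each tie `(w_{j_1} … w_{j_k})` (indices increasing)
of `m_i`'s list by the strict segment `t_{j_1} … t_{j_k} s_{j_1} … s_{j_k}`;
`b_j`'s list is `s_j t_j`; `s_j`'s list is `Q(w_j)` followed by `b_j`; and
`t_j`'s list is `b_j` followed by `Q(w_j)`, where `Q(w_j)` is `w_j`'s list with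
each `m_i` replaced by `a_i`. -/
def translate {n : ℕ} (I : SMInst (Fin n) (Fin n)) :
    SMInst (Fin n ⊕ Fin n) (Fin n ⊕ Fin n) where
  mpref := fun a w =>
    match a, w with
    | Sum.inl i, Sum.inl j =>
        (I.mpref i j).map fun r =>
          2 * n * r + n +
            (Finset.univ.filter fun j' : Fin n => I.mpref i j' = some r ∧ j' < j).card
    | Sum.inl i, Sum.inr j =>
        (I.mpref i j).map fun r =>
          2 * n * r +
            (Finset.univ.filter fun j' : Fin n => I.mpref i j' = some r ∧ j' < j).card
    | Sum.inr i, Sum.inl j => if j = i then some 0 else none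
    | Sum.inr i, Sum.inr j => if j = i then some 1 else none
  wpref := fun w a =>
    match w, a with
    | Sum.inl j, Sum.inl i => I.wpref j i
    | Sum.inl j, Sum.inr i =>
        if i = j then some ((Finset.univ.sup fun i' : Fin n => (I.wpref j i').getD 0) + 1)
        else none
    | Sum.inr j, Sum.inl i => (I.wpref j i).map (· + 1)
    | Sum.inr j, Sum.inr i => if i = j then some 0 else none

/-- The projection of a matching `M'` of the translated instance back to the
original instance: `M = {(m_i, w_j) : (a_i, s_j) ∈ M' ∨ (a_i, t_j) ∈ M'}`. -/
def projectM {n : ℕ} (M' : Finset ((Fin n ⊕ Fin n) × (Fin n ⊕ Fin n))) :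
    Finset (Fin n × Fin n) :=
  Finset.univ.filter fun p =>
    (Sum.inl p.1, Sum.inl p.2) ∈ M' ∨ (Sum.inl p.1, Sum.inr p.2) ∈ M'

end SMInst
namespace SMInst
variable {n : ℕ} {I : SMInst (Fin n) (Fin n)} {M' : Finset ((Fin n ⊕ Fin n) × (Fin n ⊕ Fin n))}

lemma tr_mll (i j : Fin n) : (translate I).mpref (Sum.inl i) (Sum.inl j) =
    (I.mpref i j).map (fun r => 2 * n * r + n +
      (Finset.univ.filter fun j' : Fin n => I.mpref i j' = some r ∧ j' < j).card) := rfl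

lemma tr_mlr (i j : Fin n) : (translate I).mpref (Sum.inl i) (Sum.inr j) =
    (I.mpref i j).map (fun r => 2 * n * r +
      (Finset.univ.filter fun j' : Fin n => I.mpref i j' = some r ∧ j' < j).card) := rfl

lemma tr_mrl (i j : Fin n) : (translate I).mpref (Sum.inr i) (Sum.inl j) =
    if j = i then some 0 else none := rfl

lemma tr_mrr (i j : Fin n) : (translate I).mpref (Sum.inr i) (Sum.inr j) =
    if j = i then some 1 else none := rfl

lemma tr_wll (j i : Fin n) : (translate I).wpref (Sum.inl j) (Sum.inl i) = I.wpref j i := rfl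

lemma tr_wlr (j i : Fin n) : (translate I).wpref (Sum.inl j) (Sum.inr i) =
    (if i = j then some ((Finset.univ.sup fun i' : Fin n => (I.wpref j i').getD 0) + 1) else none) := rfl

lemma tr_wrl (j i : Fin n) : (translate I).wpref (Sum.inr j) (Sum.inl i) =
    (I.wpref j i).map (· + 1) := rfl

lemma tr_wrr (j i : Fin n) : (translate I).wpref (Sum.inr j) (Sum.inr i) =
    if i = j then some 0 else none := rfl

lemma mem_projectM {p : Fin n × Fin n} :
    p ∈ projectM M' ↔ (Sum.inl p.1, Sum.inl p.2) ∈ M' ∨ (Sum.inl p.1, Sum.inr p.2) ∈ M' := by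
  simp [projectM]

end SMInst
namespace SMInst
variable {n : ℕ} {I : SMInst (Fin n) (Fin n)} {M' : Finset ((Fin n ⊕ Fin n) × (Fin n ⊕ Fin n))}

/-- `b_j`'s partner can only be `s_j` or `t_j`. -/
lemma b_partner (hM : (translate I).IsMatching M') {j : Fin n} {y}
    (h : (Sum.inr j, y) ∈ M') : y = Sum.inl j ∨ y = Sum.inr j := by
  have hacc := (hM.1 _ h).1
  unfold mAcc at hacc
  rcases y with k | k
  · rw [tr_mrl] at hacc
    have : k = j := by by_contra hne; simp [hne] at hacc
    exact Or.inl (by rw [this])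
  · rw [tr_mrr] at hacc
    have : k = j := by by_contra hne; simp [hne] at hacc
    exact Or.inr (by rw [this])

/-- `s_j`'s partner is some `a_i` or `b_j`. -/
lemma s_partner (hM : (translate I).IsMatching M') {j : Fin n} {x}
    (h : (x, Sum.inl j) ∈ M') : (∃ i, x = Sum.inl i) ∨ x = Sum.inr j := by
  have hacc := (hM.1 _ h).2
  unfold wAcc at hacc
  rcases x with k | k
  · exact Or.inl ⟨k, rfl⟩
  · rw [tr_wlr] at hacc
    have : k = j := by by_contra hne; simp [hne] at hacc
    exact Or.inr (by rw [this])

/-- `t_j`'s partner is some `a_i` or `b_j`. -/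
lemma t_partner (hM : (translate I).IsMatching M') {j : Fin n} {x}
    (h : (x, Sum.inr j) ∈ M') : (∃ i, x = Sum.inl i) ∨ x = Sum.inr j := by
  have hacc := (hM.1 _ h).2
  unfold wAcc at hacc
  rcases x with k | k
  · exact Or.inl ⟨k, rfl⟩
  · rw [tr_wrr] at hacc
    have : k = j := by by_contra hne; simp [hne] at hacc
    exact Or.inr (by rw [this])

end SMInst
namespace SMInst
variable {n : ℕ} {I : SMInst (Fin n) (Fin n)} {M' : Finset ((Fin n ⊕ Fin n) × (Fin n ⊕ Fin n))}

/-- If `a_i` is matched to `t_j`, then `b_j` is matched to `s_j`. -/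
lemma bs_of_at (hM' : (translate I).IsStable M') {i j : Fin n}
    (h : (Sum.inl i, Sum.inr j) ∈ M') : (Sum.inr j, Sum.inl j) ∈ M' := by
  by_contra hbs
  apply hM'.2 (Sum.inr j) (Sum.inr j)
  have hsome : (I.wpref j i).isSome := by
    simpa [wAcc, tr_wrl] using (hM'.1.1 _ h).2
  obtain ⟨r, hr⟩ := Option.isSome_iff_exists.1 hsome
  refine ⟨by simp [mAcc, tr_mrr], by simp [wAcc, tr_wrr], ?_, ?_⟩
  · left; intro y hy
    rcases b_partner hM'.1 hy with rfl | rfl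
    · exact hbs hy
    · exact absurd (hM'.1.2.2 _ hy _ h rfl) (by simp)
  · right
    exact ⟨Sum.inl i, h, 0, r + 1, by simp [tr_wrr], by simp [tr_wrl, hr], Nat.succ_pos r⟩

/-- If `w_j` is fully single (no `a_i` matched to `s_j` or `t_j`), then
`b_j` is matched to `s_j` and `t_j` is single. -/
lemma single_struct (hM' : (translate I).IsStable M') {j : Fin n}
    (hs : ∀ i : Fin n, (Sum.inl i, Sum.inl j) ∉ M')
    (ht : ∀ i : Fin n, (Sum.inl i, Sum.inr j) ∉ M') :
    (Sum.inr j, Sum.inl j) ∈ M' ∧ ∀ x, (x, Sum.inr j) ∉ M' := by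
  have hbs : (Sum.inr j, Sum.inl j) ∈ M' := by
    by_contra hbs
    apply hM'.2 (Sum.inr j) (Sum.inl j)
    refine ⟨by simp [mAcc, tr_mrl], by simp [wAcc, tr_wlr], ?_, ?_⟩
    · by_cases hbt : (Sum.inr j, Sum.inr j) ∈ M'
      · right; exact ⟨Sum.inr j, hbt, 0, 1, by simp [tr_mrl], by simp [tr_mrr], Nat.zero_lt_one⟩
      · left; intro y hy
        rcases b_partner hM'.1 hy with rfl | rfl
        · exact hbs hy
        · exact hbt hy
    · left; intro x hx
      rcases s_partner hM'.1 hx with ⟨i, rfl⟩ | rfl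
      · exact hs i hx
      · exact hbs hx
  refine ⟨hbs, fun x hx => ?_⟩
  rcases t_partner hM'.1 hx with ⟨i, rfl⟩ | rfl
  · exact ht i hx
  · exact absurd (hM'.1.2.1 _ hx _ hbs rfl) (by simp)

end SMInst
namespace SMInst
variable {n : ℕ} {I : SMInst (Fin n) (Fin n)} {M' : Finset ((Fin n ⊕ Fin n) × (Fin n ⊕ Fin n))}
  {N : Finset (Fin n × Fin n)}

lemma mem_projectM' {i j : Fin n} :
    (i, j) ∈ projectM M' ↔ (Sum.inl i, Sum.inl j) ∈ M' ∨ (Sum.inl i, Sum.inr j) ∈ M' := by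
  simp [projectM]

lemma a_single {i : Fin n} (hm : ∀ k, (i, k) ∉ projectM M') :
    ∀ y, (Sum.inl i, y) ∉ M' := by
  intro y hy
  rcases y with k | k
  · exact hm k (mem_projectM'.2 (Or.inl hy))
  · exact hm k (mem_projectM'.2 (Or.inr hy))

/-- No edge of a stable matching `N` of `I` can have both endpoints single in the
projected matching. -/
lemma no_both_single (hM' : (translate I).IsStable M') (hN : I.IsStable N)
    {i j : Fin n} (hij : (i, j) ∈ N)
    (hm : ∀ k, (i, k) ∉ projectM M') (hw : ∀ k, (k, j) ∉ projectM M') : False := by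
  have hs : ∀ k : Fin n, (Sum.inl k, Sum.inl j) ∉ M' :=
    fun k hk => hw k (mem_projectM'.2 (Or.inl hk))
  have ht : ∀ k : Fin n, (Sum.inl k, Sum.inr j) ∉ M' :=
    fun k hk => hw k (mem_projectM'.2 (Or.inr hk))
  obtain ⟨-, htsingle⟩ := single_struct hM' hs ht
  have hacc := hN.1.1 _ hij
  apply hM'.2 (Sum.inl i) (Sum.inr j)
  refine ⟨?_, ?_, Or.inl (a_single hm), Or.inl htsingle⟩
  · simpa [mAcc, tr_mlr] using hacc.1
  · simpa [wAcc, tr_wrl] using hacc.2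

/-- Key lemma: no "augmenting path of length 3". -/
lemma no_length3 (h1tm : I.OneTM) (hM' : (translate I).IsStable M') (hN : I.IsStable N)
    {i j i' j0 : Fin n}
    (hij : (i, j) ∈ projectM M') (hN1 : (i, j0) ∈ N) (hN2 : (i', j) ∈ N)
    (hw0 : ∀ k, (k, j0) ∉ projectM M') (hm' : ∀ k, (i', k) ∉ projectM M') : False := by
  have ha' : ∀ y, (Sum.inl i', y) ∉ M' := a_single hm'
  -- structure at w_{j0}
  have hs0 : ∀ k : Fin n, (Sum.inl k, Sum.inl j0) ∉ M' :=
    fun k hk => hw0 k (mem_projectM'.2 (Or.inl hk))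
  have ht0 : ∀ k : Fin n, (Sum.inl k, Sum.inr j0) ∉ M' :=
    fun k hk => hw0 k (mem_projectM'.2 (Or.inr hk))
  obtain ⟨-, ht0single⟩ := single_struct hM' hs0 ht0
  -- ranks from N-edges
  obtain ⟨r0, hr0⟩ := Option.isSome_iff_exists.1
    ((hN.1.1 _ hN1).1 : (I.mpref i j0).isSome)
  have hw0i : (I.wpref j0 i).isSome := (hN.1.1 _ hN1).2
  obtain ⟨ri', hri'⟩ := Option.isSome_iff_exists.1
    ((hN.1.1 _ hN2).1 : (I.mpref i' j).isSome)
  obtain ⟨ri'w, hri'w⟩ := Option.isSome_iff_exists.1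
    ((hN.1.1 _ hN2).2 : (I.wpref j i').isSome)
  have hr0 : I.mpref i j0 = some r0 := hr0
  have hri' : I.mpref i' j = some ri' := hri'
  have hri'w : I.wpref j i' = some ri'w := hri'w
  -- a_i is matched to s_j, not t_j
  have hijl : (Sum.inl i, Sum.inl j) ∈ M' := by
    rcases mem_projectM'.1 hij with h | h
    · exact h
    · -- a_i matched to t_j : then b_j-s_j matched and (a_{i'}, s_j) blocks
      exfalso
      have hbs := bs_of_at hM' h
      apply hM'.2 (Sum.inl i') (Sum.inl j)
      have hsup : ri'w ≤ Finset.univ.sup fun k : Fin n => (I.wpref j k).getD 0 := by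
        have := Finset.le_sup (f := fun k : Fin n => (I.wpref j k).getD 0)
          (Finset.mem_univ i')
        simpa [hri'w] using this
      refine ⟨by simp [mAcc, tr_mll, hri'], by simp [wAcc, tr_wll, hri'w],
        Or.inl ha', Or.inr ⟨Sum.inr j, hbs, ri'w, _, by simp [tr_wll, hri'w],
          by simp [tr_wlr], Nat.lt_succ_of_le hsup⟩⟩
  -- rank of w_j in m_i's list, and of m_i in w_j's list
  have hmsome : (I.mpref i j).isSome := by
    simpa [mAcc, tr_mll] using (hM'.1.1 _ hijl).1
  obtain ⟨r, hr⟩ := Option.isSome_iff_exists.1 hmsome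
  have hwisome : (I.wpref j i).isSome := (hM'.1.1 _ hijl).2
  obtain ⟨ri, hri⟩ := Option.isSome_iff_exists.1 hwisome
  have hri : I.wpref j i = some ri := hri
  -- Step A: w_j strictly prefers m_i to m_{i'}
  have hwlt : ri < ri'w := by
    have hnp : ¬ (translate I).wPref (Sum.inl j) (Sum.inl i') (Sum.inl i) := fun hp =>
      hM'.2 (Sum.inl i') (Sum.inl j)
        ⟨by simp [mAcc, tr_mll, hri'], by simp [wAcc, tr_wll, hri'w],
         Or.inl ha', Or.inr ⟨Sum.inl i, hijl, hp⟩⟩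
    have hle : ri ≤ ri'w := by
      by_contra hlt
      push_neg at hlt
      exact hnp ⟨ri'w, ri, by simpa [tr_wll] using hri'w, by simpa [tr_wll] using hri, hlt⟩
    rcases hle.lt_or_eq with hcase | hcase
    · exact hcase
    · exfalso
      have hii' : i = i' := h1tm j i i' (by rw [hri, hri'w, hcase]) (by simp [wAcc, hri])
      subst hii'
      exact ha' _ hijl
  -- Step B: m_i strictly prefers w_j to w_{j0}
  have hmlt : r < r0 := by
    have hc0 : (Finset.univ.filter fun j' : Fin n =>
        I.mpref i j' = some r0 ∧ j' < j0).card < n := by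
      have hsub : (Finset.univ.filter fun j' : Fin n =>
          I.mpref i j' = some r0 ∧ j' < j0) ⊆ Finset.univ.erase j0 := by
        intro x hx
        exact Finset.mem_erase.2 ⟨ne_of_lt (Finset.mem_filter.1 hx).2.2, Finset.mem_univ x⟩
      have h1 := Finset.card_le_card hsub
      have h2 : (Finset.univ.erase j0).card = n - 1 := by
        rw [Finset.card_erase_of_mem (Finset.mem_univ j0)]
        simp
      have h3 : 0 < n := j0.pos
      omega
    have hnm : ¬ (translate I).mPref (Sum.inl i) (Sum.inr j0) (Sum.inl j) := fun hp =>
      hM'.2 (Sum.inl i) (Sum.inr j0)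
        ⟨by simp [mAcc, tr_mlr, hr0], by simp [wAcc, tr_wrl, hw0i],
         Or.inr ⟨Sum.inl j, hijl, hp⟩, Or.inl ht0single⟩
    have hkey : ¬ (2 * n * r0 + (Finset.univ.filter fun j' : Fin n =>
        I.mpref i j' = some r0 ∧ j' < j0).card < 2 * n * r + n +
        (Finset.univ.filter fun j' : Fin n => I.mpref i j' = some r ∧ j' < j).card) :=
      fun hlt => hnm ⟨_, _, by simp [tr_mlr, hr0], by simp [tr_mll, hr], hlt⟩
    have hAB : 2 * n * r < 2 * n * r0 := by
      set A := 2 * n * r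
      set B := 2 * n * r0
      omega
    exact Nat.lt_of_mul_lt_mul_left hAB
  -- (m_i, w_j) blocks N : contradiction
  exact hN.2 i j ⟨by simp [mAcc, hr], by simp [wAcc, hri],
    Or.inr ⟨j0, hN1, r, r0, hr, hr0, hmlt⟩,
    Or.inr ⟨i', hN2, ri, ri'w, hri, hri'w, hwlt⟩⟩

end SMInst
/-- The projected matching is a 1.5-approximation: if `M'` is a stable matching of the
translated instance, then its projection `M` satisfies `3|M| ≥ 2|N|` for every
(weakly) stable matching `N` of `I` (in particular `|M_opt|/|M| ≤ 1.5` for a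
maximum-size stable matching `M_opt`). -/
theorem projection_is_one_point_five_approx {n : ℕ}
    (I : SMInst (Fin n) (Fin n)) (h1tm : I.OneTM)
    (M' : Finset ((Fin n ⊕ Fin n) × (Fin n ⊕ Fin n)))
    (hM' : (SMInst.translate I).IsStable M')
    (N : Finset (Fin n × Fin n)) (hN : I.IsStable N) :
    2 * N.card ≤ 3 * (SMInst.projectM M').card := by
  classical
  set M : Finset (Fin n × Fin n) := SMInst.projectM M' with hMdef
  -- every N-edge has an M-matched endpoint
  have hcov : ∀ p ∈ N, (∃ w, (p.1, w) ∈ M) ∨ (∃ m, (m, p.2) ∈ M) := by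
    rintro ⟨i, j⟩ hp
    by_contra hcon
    push_neg at hcon
    exact SMInst.no_both_single hM' hN hp (fun k => hcon.1 k) (fun k => hcon.2 k)
  set P : Fin n × Fin n → Prop := fun p => ∃ w, (p.1, w) ∈ M with hP
  set Q : Fin n × Fin n → Prop := fun p => ∃ m, (m, p.2) ∈ M with hQ
  set Nm := N.filter P with hNmdef
  set Nw := N.filter Q with hNwdef
  set N2 := N.filter (fun p => P p ∧ Q p) with hN2def
  set S1 := N.filter (fun p => ¬(P p ∧ Q p)) with hS1def
  -- counting identities
  have hsplit : N2.card + S1.card = N.card :=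
    Finset.card_filter_add_card_filter_not _
  have hunion : Nm ∪ Nw = N := by
    rw [hNmdef, hNwdef, ← Finset.filter_or]
    exact Finset.filter_true_of_mem hcov
  have hinter : Nm ∩ Nw = N2 := by
    rw [hNmdef, hNwdef, hN2def, Finset.filter_and]
  have hinc : N.card + N2.card = Nm.card + Nw.card := by
    rw [← hunion, ← hinter]
    exact Finset.card_union_add_card_inter _ _
  -- injections into M
  have hNm : Nm.card ≤ M.card := by
    apply Finset.card_le_card_of_injOn
      (fun p => if h : ∃ w, (p.1, w) ∈ M then (p.1, h.choose) else p)
    · intro p hp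
      dsimp only
      have hPp : P p := (Finset.mem_filter.1 hp).2
      rw [dif_pos hPp]
      exact hPp.choose_spec
    · intro p hp q hq hfq
      dsimp only at hfq
      have hPp : P p := (Finset.mem_filter.1 hp).2
      have hPq : P q := (Finset.mem_filter.1 hq).2
      rw [dif_pos hPp, dif_pos hPq] at hfq
      injection hfq with e1 e2
      exact hN.1.2.1 p (Finset.mem_filter.1 hp).1 q (Finset.mem_filter.1 hq).1 e1
  have hNw : Nw.card ≤ M.card := by
    apply Finset.card_le_card_of_injOn
      (fun p => if h : ∃ m, (m, p.2) ∈ M then (h.choose, p.2) else p)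
    · intro p hp
      dsimp only
      have hQp : Q p := (Finset.mem_filter.1 hp).2
      rw [dif_pos hQp]
      exact hQp.choose_spec
    · intro p hp q hq hfq
      dsimp only at hfq
      have hQp : Q p := (Finset.mem_filter.1 hp).2
      have hQq : Q q := (Finset.mem_filter.1 hq).2
      rw [dif_pos hQp, dif_pos hQq] at hfq
      injection hfq with e1 e2
      exact hN.1.2.2 p (Finset.mem_filter.1 hp).1 q (Finset.mem_filter.1 hq).1 e2
  have hS1 : S1.card ≤ M.card := by
    apply Finset.card_le_card_of_injOn
      (fun p => if h : ∃ w, (p.1, w) ∈ M then (p.1, h.choose)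
        else if h2 : ∃ m, (m, p.2) ∈ M then (h2.choose, p.2) else p)
    · intro p hp
      dsimp only
      obtain ⟨hpN, hpnot⟩ := Finset.mem_filter.1 hp
      by_cases h : ∃ w, (p.1, w) ∈ M
      · rw [dif_pos h]; exact h.choose_spec
      · have h2 : ∃ m, (m, p.2) ∈ M := (hcov p hpN).resolve_left h
        rw [dif_neg h, dif_pos h2]; exact h2.choose_spec
    · intro p hp q hq hfq
      dsimp only at hfq
      obtain ⟨hpN, hpnot⟩ := Finset.mem_filter.1 hp
      obtain ⟨hqN, hqnot⟩ := Finset.mem_filter.1 hq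
      by_cases h1 : ∃ w, (p.1, w) ∈ M
      · by_cases h2 : ∃ w, (q.1, w) ∈ M
        · rw [dif_pos h1, dif_pos h2] at hfq
          injection hfq with e1 e2
          exact hN.1.2.1 p hpN q hqN e1
        · -- cross case: forbidden length-3 configuration
          exfalso
          have h2' : ∃ m, (m, q.2) ∈ M := (hcov q hqN).resolve_left h2
          rw [dif_pos h1, dif_neg h2, dif_pos h2'] at hfq
          injection hfq with e1 e2
          have hMedge : (p.1, q.2) ∈ M := e2 ▸ h1.choose_spec
          have hnotQp : ∀ k, (k, p.2) ∉ M := fun k hk => hpnot ⟨h1, ⟨k, hk⟩⟩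
          have h2n : ∀ k, (q.1, k) ∉ M := fun k hk => h2 ⟨k, hk⟩
          exact SMInst.no_length3 h1tm hM' hN hMedge
            (show (p.1, p.2) ∈ N by simpa using hpN)
            (show (q.1, q.2) ∈ N by simpa using hqN)
            hnotQp h2n
      · by_cases h2 : ∃ w, (q.1, w) ∈ M
        · -- symmetric cross case
          exfalso
          have h1' : ∃ m, (m, p.2) ∈ M := (hcov p hpN).resolve_left h1
          rw [dif_neg h1, dif_pos h1', dif_pos h2] at hfq
          injection hfq with e1 e2
          have hMedge : (q.1, p.2) ∈ M := e1 ▸ h1'.choose_spec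
          have hnotQq : ∀ k, (k, q.2) ∉ M := fun k hk => hqnot ⟨h2, ⟨k, hk⟩⟩
          have h1n : ∀ k, (p.1, k) ∉ M := fun k hk => h1 ⟨k, hk⟩
          exact SMInst.no_length3 h1tm hM' hN hMedge
            (show (q.1, q.2) ∈ N by simpa using hqN)
            (show (p.1, p.2) ∈ N by simpa using hpN)
            hnotQq h1n
        · have h1' : ∃ m, (m, p.2) ∈ M := (hcov p hpN).resolve_left h1
          have h2' : ∃ m, (m, q.2) ∈ M := (hcov q hqN).resolve_left h2
          rw [dif_neg h1, dif_pos h1', dif_neg h2, dif_pos h2'] at hfq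
          injection hfq with e1 e2
          exact hN.1.2.2 p hpN q hqN e2
  omega
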